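/- (Perfect correlation, two known features) Suppose θ̂ minimizes L(θ) = ½‖y − Xθ‖₂² + nλ·eye(θ) with nλ > 0, and columns i, j of X are identical with rᵢ = rⱼ = 1. Then θ̂ᵢ = θ̂ⱼ. -/
import Mathlib


noncomputable def eye {d : ℕ} (r θ : Fin d → ℝ) : ℝ :=
  (∑ i, (1 - r i) * |θ i|) +
    Real.sqrt ((∑ i, (1 - r i) * |θ i|) ^ 2 + ∑ i, (r i * θ i) ^ 2)

lemma sum_split_two {d : ℕ} (i j : Fin d) (hij : i ≠ j) (f : Fin d → ℝ) :
    ∑ l, f l = f i + f j + ∑ l ∈ (Finset.univ.erase i).erase j, f l := by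
  have h1 : ∑ l ∈ Finset.univ.erase i, f l
      = f j + ∑ l ∈ (Finset.univ.erase i).erase j, f l := by
    rw [Finset.add_sum_erase]
    exact Finset.mem_erase.mpr ⟨hij.symm, Finset.mem_univ j⟩
  have h0 : (∑ l, f l) = f i + ∑ l ∈ Finset.univ.erase i, f l := by
    rw [Finset.add_sum_erase]
    exact Finset.mem_univ i
  rw [h0, h1, add_assoc]

theorem eye_perfect_corr_two_known {n d : ℕ}
    (X : Fin n → Fin d → ℝ) (y : Fin n → ℝ) (r : Fin d → ℝ)
    (hr : ∀ i, r i = 0 ∨ r i = 1)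
    (nl : ℝ) (hnl : 0 < nl)
    (i j : Fin d) (hij : i ≠ j) (hri : r i = 1) (hrj : r j = 1)
    (hcol : ∀ k, X k i = X k j)
    (θhat : Fin d → ℝ)
    (hmin : ∀ θ : Fin d → ℝ,
      (1 / 2) * (∑ k, (y k - ∑ l, X k l * θhat l) ^ 2) + nl * eye r θhat ≤
      (1 / 2) * (∑ k, (y k - ∑ l, X k l * θ l) ^ 2) + nl * eye r θ) :
    θhat i = θhat j := by
  by_contra hne
  set m : ℝ := (θhat i + θhat j) / 2 with hm
  set θ' : Fin d → ℝ := fun l => if l = i then m else if l = j then m else θhat l with hθ'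
  have hθ'i : θ' i = m := by simp [hθ']
  have hθ'j : θ' j = m := by simp [hθ', hij.symm]
  have hθ'o : ∀ l, l ≠ i → l ≠ j → θ' l = θhat l := by
    intro l h1 h2; simp [hθ', h1, h2]
  have hcomp : ∀ (g : Fin d → ℝ → ℝ),
      ∑ l ∈ (Finset.univ.erase i).erase j, g l (θ' l)
        = ∑ l ∈ (Finset.univ.erase i).erase j, g l (θhat l) := by
    intro g
    apply Finset.sum_congr rfl
    intro l hl
    rw [Finset.mem_erase, Finset.mem_erase] at hl
    rw [hθ'o l hl.2.1 hl.1]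
  -- residual equal
  have hres : ∀ k, ∑ l, X k l * θ' l = ∑ l, X k l * θhat l := by
    intro k
    rw [sum_split_two i j hij (fun l => X k l * θ' l),
        sum_split_two i j hij (fun l => X k l * θhat l),
        hcomp (fun l t => X k l * t)]
    have := hcol k
    simp only [hθ'i, hθ'j]
    rw [this, hm]; ring
  -- L1 part equal
  have hL1 : ∑ l, (1 - r l) * |θ' l| = ∑ l, (1 - r l) * |θhat l| := by
    rw [sum_split_two i j hij (fun l => (1 - r l) * |θ' l|),
        sum_split_two i j hij (fun l => (1 - r l) * |θhat l|),
        hcomp (fun l t => (1 - r l) * |t|)]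
    simp [hri, hrj]
  -- L2 part strictly smaller
  have hL2 : ∑ l, (r l * θ' l) ^ 2 < ∑ l, (r l * θhat l) ^ 2 := by
    rw [sum_split_two i j hij (fun l => (r l * θ' l) ^ 2),
        sum_split_two i j hij (fun l => (r l * θhat l) ^ 2),
        hcomp (fun l t => (r l * t) ^ 2)]
    simp only [hθ'i, hθ'j, hri, hrj, one_mul]
    have h0 : θhat i - θhat j ≠ 0 := sub_ne_zero.mpr hne
    have hpos : (θhat i - θhat j) ^ 2 > 0 := by positivity
    rw [hm]
    nlinarith [hpos]
  have hsqrt : Real.sqrt ((∑ l, (1 - r l) * |θ' l|) ^ 2 + ∑ l, (r l * θ' l) ^ 2)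
      < Real.sqrt ((∑ l, (1 - r l) * |θhat l|) ^ 2 + ∑ l, (r l * θhat l) ^ 2) := by
    apply Real.sqrt_lt_sqrt
    · positivity
    · rw [hL1]; linarith
  have heye : eye r θ' < eye r θhat := by
    unfold eye
    rw [hL1] at hsqrt ⊢
    linarith
  have := hmin θ'
  simp only [hres] at this
  have := mul_lt_mul_of_pos_left heye hnl
  linarith
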